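/- In the setting above (N ⊴ G of finite index, L irreducible with full stabilizer, 𝒜 the twisted group algebra), let E be a finite-dimensional left 𝒜-module. Then the rule ι(a)g · (u ⊗ v) = ρ_a u ⊗ θ_a⁻¹(g v), for a ∈ A and g ∈ N, defines the structure of a G-representation on E ⊗ L. -/
import Mathlib


open scoped TensorProduct

/-- In the Clifford-theoretic setting (`N ⊴ G` of finite index, `A = G ⧸ N`, section `ι`
with `ι 1 = 1`, irreducible `N`-representation `L = (V, ρ)` with full stabilizer witnessed
by `θ_a : L ≅ {}^{ι a}L`, `θ_1 = id`, and 2-cocycle `α`), let `E` be a finite-dimensional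
left module over the twisted group algebra `𝒜` (encoded by operators `m a` with
`m 1 = id` and `m a ∘ m b = α(a,b) • m (ab)`).  Then the rule
`ι(a)g · (u ⊗ v) = ρ_a u ⊗ θ_a⁻¹(g v)` for `a ∈ A`, `g ∈ N` defines a representation of
`G` on `E ⊗ L`: in closed form, `x ∈ G` acts on `u ⊗ v` by
`m (π x) u ⊗ θ_{π x}⁻¹ (ρ(ι(π x)⁻¹ x) v)`. -/
theorem twisted_module_tensor_rep {k G V E : Type*} [Field k] [IsAlgClosed k] [Group G]
    [AddCommGroup V] [Module k V] [FiniteDimensional k V]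
    [AddCommGroup E] [Module k E] [FiniteDimensional k E]
    (N : Subgroup G) [hN : N.Normal] [Finite (G ⧸ N)]
    (ρ : Representation k N V)
    (ι : G ⧸ N → G) (hι : ∀ a, QuotientGroup.mk' N (ι a) = a) (hι1 : ι 1 = 1)
    (θ : G ⧸ N → (V ≃ₗ[k] V)) (hθ1 : θ 1 = LinearEquiv.refl k V)
    (hθ : ∀ (a : G ⧸ N) (n : N) (v : V),
      θ a (ρ n v) =
        ρ ⟨(ι a)⁻¹ * ↑n * ι a, by simpa using hN.conj_mem _ n.2 (ι a)⁻¹⟩ (θ a v))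
    (α : G ⧸ N → G ⧸ N → kˣ)
    (hα : ∀ (a b : G ⧸ N) (v : V),
      ρ ⟨(ι (a * b))⁻¹ * ι a * ι b, by
          rw [← QuotientGroup.eq_one_iff]
          show (QuotientGroup.mk' N) ((ι (a * b))⁻¹ * ι a * ι b) = 1
          simp only [map_mul, map_inv, hι]
          group⟩
        (θ b (θ a v)) = (α a b : k) • θ (a * b) v)
    (m : G ⧸ N → (E →ₗ[k] E)) (hm1 : m 1 = LinearMap.id)
    (hm : ∀ (a b : G ⧸ N) (u : E), m a (m b u) = (α a b : k) • m (a * b) u) :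
    ∃ σ : Representation k G (E ⊗[k] V),
      ∀ (x : G) (u : E) (v : V),
        σ x (u ⊗ₜ[k] v) =
          m (QuotientGroup.mk' N x) u ⊗ₜ[k]
            (θ (QuotientGroup.mk' N x)).symm
              (ρ ⟨(ι (QuotientGroup.mk' N x))⁻¹ * x, by
                  rw [← QuotientGroup.eq_one_iff]
                  show (QuotientGroup.mk' N) ((ι (QuotientGroup.mk' N x))⁻¹ * x) = 1
                  simp only [map_mul, map_inv, hι]
                  group⟩ v) := by
  classical
  have hmem : ∀ x : G, (ι (QuotientGroup.mk' N x))⁻¹ * x ∈ N := by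
    intro x
    rw [← QuotientGroup.eq_one_iff]
    show (QuotientGroup.mk' N) ((ι (QuotientGroup.mk' N x))⁻¹ * x) = 1
    simp only [map_mul, map_inv, hι]
    group
  have hcmem : ∀ a b : G ⧸ N, (ι (a * b))⁻¹ * ι a * ι b ∈ N := by
    intro a b
    rw [← QuotientGroup.eq_one_iff]
    show (QuotientGroup.mk' N) ((ι (a * b))⁻¹ * ι a * ι b) = 1
    simp only [map_mul, map_inv, hι]
    group
  set fV : G → (V →ₗ[k] V) := fun x =>
    ((θ (QuotientGroup.mk' N x)).symm.toLinearMap).comp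
      (ρ ⟨(ι (QuotientGroup.mk' N x))⁻¹ * x, hmem x⟩) with hfV
  -- conjugation lemma
  have hθinv : ∀ (b : G ⧸ N) (n : N) (w : V),
      ρ n ((θ b).symm w) =
        (θ b).symm (ρ ⟨(ι b)⁻¹ * ↑n * ι b, by simpa using hN.conj_mem _ n.2 (ι b)⁻¹⟩ w) := by
    intro b n w
    apply (θ b).injective
    rw [hθ]
    simp
  have hαinv : ∀ (a b : G ⧸ N) (w : V),
      (θ a).symm ((θ b).symm w) =
        ((α a b : k))⁻¹ • (θ (a * b)).symm (ρ ⟨(ι (a * b))⁻¹ * ι a * ι b, hcmem a b⟩ w) := by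
    intro a b w
    have h := hα a b ((θ a).symm ((θ b).symm w))
    simp only [LinearEquiv.apply_symm_apply] at h
    have h2 := congrArg (θ (a * b)).symm h
    simp only [map_smul, LinearEquiv.symm_apply_apply] at h2
    rw [h2, smul_smul, inv_mul_cancel₀ (by exact_mod_cast (α a b).ne_zero), one_smul]
  -- the V-side multiplicativity
  have hfVmul : ∀ (x y : G) (v : V), fV x (fV y v) =
      ((α (QuotientGroup.mk' N x) (QuotientGroup.mk' N y) : k))⁻¹ • fV (x * y) v := by
    intro x y v
    have hab : QuotientGroup.mk' N (x * y)
        = QuotientGroup.mk' N x * QuotientGroup.mk' N y := map_mul _ x y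
    have e1 : θ (QuotientGroup.mk' N (x * y))
        = θ (QuotientGroup.mk' N x * QuotientGroup.mk' N y) := by rw [hab]
    have hmul : ∀ (n n' : N) (w : V), ρ n (ρ n' w) = ρ (n * n') w := by
      intro n n' w
      rw [map_mul, Module.End.mul_apply]
    have heq : ((⟨(ι (QuotientGroup.mk' N x * QuotientGroup.mk' N y))⁻¹ *
            ι (QuotientGroup.mk' N x) * ι (QuotientGroup.mk' N y), hcmem _ _⟩ *
          (⟨(ι (QuotientGroup.mk' N y))⁻¹ *
              ↑(⟨(ι (QuotientGroup.mk' N x))⁻¹ * x, hmem x⟩ : N) * ι (QuotientGroup.mk' N y),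
              by simpa using hN.conj_mem _ (hmem x) (ι (QuotientGroup.mk' N y))⁻¹⟩ *
            ⟨(ι (QuotientGroup.mk' N y))⁻¹ * y, hmem y⟩)) : N)
        = ⟨(ι (QuotientGroup.mk' N (x * y)))⁻¹ * (x * y), hmem (x * y)⟩ := by
      ext
      simp only [Subgroup.coe_mul]
      rw [hab]
      group
    simp only [hfV, LinearMap.coe_comp, Function.comp_apply, LinearEquiv.coe_coe]
    rw [hθinv (QuotientGroup.mk' N y) ⟨(ι (QuotientGroup.mk' N x))⁻¹ * x, hmem x⟩,
      hmul, hαinv (QuotientGroup.mk' N x) (QuotientGroup.mk' N y), hmul, heq, e1]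
  refine ⟨{ toFun := fun x => TensorProduct.map (m (QuotientGroup.mk' N x)) (fV x)
            map_one' := ?_
            map_mul' := ?_ }, ?_⟩
  · show TensorProduct.map (m (QuotientGroup.mk' N (1 : G))) (fV 1) = 1
    have h1 : fV 1 = LinearMap.id := by
      have hn1 : (⟨(ι (QuotientGroup.mk' N (1 : G)))⁻¹ * 1, hmem 1⟩ : N) = 1 := by
        ext
        simp [hι1]
      ext v
      simp only [hfV, LinearMap.coe_comp, Function.comp_apply, LinearEquiv.coe_coe]
      rw [hn1]
      simp [hθ1]
    rw [h1, show QuotientGroup.mk' N (1 : G) = 1 from map_one _, hm1, TensorProduct.map_id]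
    rfl
  · intro x y
    show TensorProduct.map (m (QuotientGroup.mk' N (x * y))) (fV (x * y))
        = TensorProduct.map (m (QuotientGroup.mk' N x)) (fV x)
          * TensorProduct.map (m (QuotientGroup.mk' N y)) (fV y)
    refine TensorProduct.ext' fun u v => ?_
    have hab : QuotientGroup.mk' N (x * y)
        = QuotientGroup.mk' N x * QuotientGroup.mk' N y := map_mul _ x y
    show TensorProduct.map (m (QuotientGroup.mk' N (x * y))) (fV (x * y)) (u ⊗ₜ v)
        = TensorProduct.map (m (QuotientGroup.mk' N x)) (fV x)
            (TensorProduct.map (m (QuotientGroup.mk' N y)) (fV y) (u ⊗ₜ v))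
    rw [TensorProduct.map_tmul, TensorProduct.map_tmul, TensorProduct.map_tmul,
      hm (QuotientGroup.mk' N x) (QuotientGroup.mk' N y) u, hfVmul x y v, hab,
      ← TensorProduct.smul_tmul', TensorProduct.tmul_smul, smul_smul,
      mul_inv_cancel₀ (by exact_mod_cast (α _ _).ne_zero), one_smul]
  · intro x u v
    simp [hfV]
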